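/- Let $u$ be a toric psh function of logarithmic growth on $\mathbb{C}^n$ tending to $+\infty$ at infinity, and suppose $c_\infty(u) < 1$. If a polynomial $P = \sum_J c_J z^J$ satisfies $\int_{\mathbb{C}^n \setminus \mathbb{D}_R^n} |P|^2 e^{-2u}\, dV < \infty$ for some $R$, then every monomial $z^J$ with $c_J \neq 0$ also satisfies $\int_{\mathbb{C}^n \setminus \mathbb{D}_R^n} |z^J|^2 e^{-2u}\, dV < \infty$. In other words, the multiplier space $\mathcal{P}_\infty(u)$ is monomial. -/

import Mathlib

open MeasureTheory Set Filter
open scoped ENNReal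

noncomputable section

def Psh {n : ℕ} (u : (Fin n → ℂ) → ℝ) : Prop :=
  UpperSemicontinuous u ∧ ∀ (z w : Fin n → ℂ) (r : ℝ),
    u z ≤ (2 * Real.pi)⁻¹ * ∫ θ in (0:ℝ)..(2 * Real.pi),
      u (z + ((r : ℂ) * Complex.exp ((θ : ℂ) * Complex.I)) • w)

def LogGrowth {E : Type*} [NormedAddCommGroup E] (u : E → ℝ) : Prop :=
  ∃ σ C : ℝ, ∀ z, u z ≤ σ * Real.log (max ‖z‖ 1) + C

def Exhaustive {E : Type*} [NormedAddCommGroup E] (u : E → ℝ) : Prop :=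
  Tendsto u (Bornology.cobounded E) atTop

def Toric {n : ℕ} (u : (Fin n → ℂ) → ℝ) : Prop :=
  ∀ z w : Fin n → ℂ, (∀ i, ‖z i‖ = ‖w i‖) → u z = u w

def lctInfty {E : Type*} [NormedAddCommGroup E] [MeasureSpace E] (u : E → ℝ) : ℝ≥0∞ :=
  sInf (ENNReal.ofReal '' {c : ℝ | 0 < c ∧ ∃ R : ℝ,
    IntegrableOn (fun z => Real.exp (-(2 * c * u z))) {z | R < ‖z‖} volume})

-- auxiliary lemmas

lemma aux_orth {N : ℕ} (hN : 0 < N) {ω : ℂ} (hprim : IsPrimitiveRoot ω N)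
    {m j : ℕ} (hm : m < N) (hj : j < N) :
    ∑ t : Fin N, (ω ^ m * (ω ^ j)⁻¹) ^ (t : ℕ) = if m = j then (N : ℂ) else 0 := by
  have hω0 : ω ≠ 0 := by
    intro h
    have := hprim.pow_eq_one
    rw [h, zero_pow hN.ne'] at this
    exact zero_ne_one this
  set ζ : ℂ := ω ^ m * (ω ^ j)⁻¹ with hζ
  rw [Fin.sum_univ_eq_sum_range (fun t => ζ ^ t) N]
  by_cases h : m = j
  · subst h
    simp [hζ, mul_inv_cancel₀ (pow_ne_zero _ hω0)]
  · have hζ1 : ζ ≠ 1 := by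
      intro hh
      apply h
      apply hprim.pow_inj hm hj
      rw [hζ, mul_inv_eq_one₀ (pow_ne_zero _ hω0)] at hh
      exact hh
    have hζN : ζ ^ N = 1 := by
      rw [hζ, mul_pow, inv_pow, ← pow_mul, ← pow_mul, mul_comm m N, mul_comm j N,
        pow_mul, pow_mul, hprim.pow_eq_one, one_pow, one_pow, inv_one, mul_one]
    rw [geom_sum_eq hζ1, hζN, sub_self, zero_div, if_neg h]


lemma aux_mp_pi {n : ℕ} (e : Fin n → (ℂ ≃ᵐ ℂ))
    (he : ∀ i, MeasurePreserving (e i) volume volume) :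
    MeasurePreserving (MeasurableEquiv.piCongrRight e)
      (volume : Measure (Fin n → ℂ)) volume := by
  refine ⟨(MeasurableEquiv.piCongrRight e).measurable, ?_⟩
  rw [volume_pi]
  refine (Measure.pi_eq fun s hs => ?_).symm
  rw [Measure.map_apply (MeasurableEquiv.piCongrRight e).measurable
    (MeasurableSet.univ_pi hs)]
  have hpre : (MeasurableEquiv.piCongrRight e) ⁻¹' Set.pi univ s
      = Set.pi univ fun i => e i ⁻¹' s i := by
    ext x
    simp [MeasurableEquiv.piCongrRight, Equiv.piCongrRight, Set.mem_pi]
  rw [hpre, Measure.pi_pi]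
  refine Finset.prod_congr rfl fun i _ => ?_
  conv_rhs => rw [← (he i).map_eq]
  rw [Measure.map_apply (e i).measurable (hs i)]

lemma aux_key {n : ℕ} (P : MvPolynomial (Fin n) ℂ) (J : Fin n →₀ ℕ) (hJ : J ∈ P.support)
    {N : ℕ} (hN : 0 < N) {ω : ℂ} (hprim : IsPrimitiveRoot ω N) (hω0 : ω ≠ 0)
    (hJN : ∀ i, J i < N) (hdeg : ∀ M ∈ P.support, ∀ i, (M : Fin n →₀ ℕ) i < N)
    (z : Fin n → ℂ) :
    ∑ k : Fin n → Fin N, ((∏ i, (ω ^ (J i * (k i : ℕ)))⁻¹) *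
      MvPolynomial.eval (fun i => ω ^ (k i : ℕ) * z i) P)
      = (N : ℂ) ^ n * (MvPolynomial.coeff J P * ∏ i, z i ^ J i) := by
  have step1 : ∀ k : Fin n → Fin N,
      (∏ i, (ω ^ (J i * (k i : ℕ)))⁻¹) *
        MvPolynomial.eval (fun i => ω ^ (k i : ℕ) * z i) P
      = ∑ M ∈ P.support, MvPolynomial.coeff M P *
          ∏ i, ((ω ^ (M i) * (ω ^ (J i))⁻¹) ^ (k i : ℕ) * z i ^ M i) := by
    intro k
    rw [MvPolynomial.eval_eq', Finset.mul_sum]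
    refine Finset.sum_congr rfl fun M hM => ?_
    rw [mul_left_comm]
    congr 1
    rw [← Finset.prod_mul_distrib]
    refine Finset.prod_congr rfl fun i _ => ?_
    field_simp
    have hb : ∀ m : ℕ, ω ^ m * ω⁻¹ ^ m = 1 := fun m => by
      rw [← mul_pow, mul_inv_cancel₀ hω0, one_pow]
    linear_combination (-(ω ^ ((k i : ℕ) * M i) * z i ^ M i)) * hb ((k i : ℕ) * J i)
  rw [Finset.sum_congr rfl fun k _ => step1 k, Finset.sum_comm]
  have step2 : ∀ M ∈ P.support,
      (∑ k : Fin n → Fin N, MvPolynomial.coeff M P *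
        ∏ i, ((ω ^ (M i) * (ω ^ (J i))⁻¹) ^ (k i : ℕ) * z i ^ M i))
      = MvPolynomial.coeff M P *
          ∏ i, ((if M i = J i then (N : ℂ) else 0) * z i ^ M i) := by
    intro M hM
    rw [← Finset.mul_sum]
    congr 1
    have h1 : ∀ i : Fin n, (if M i = J i then (N : ℂ) else 0) * z i ^ M i
        = ∑ t : Fin N, ((ω ^ (M i) * (ω ^ (J i))⁻¹) ^ (t : ℕ) * z i ^ M i) := by
      intro i
      rw [← Finset.sum_mul, aux_orth hN hprim (hdeg M hM i) (hJN i)]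
    rw [Finset.prod_congr rfl fun i _ => h1 i, Finset.prod_univ_sum, Fintype.piFinset_univ]
  rw [Finset.sum_congr rfl step2, Finset.sum_eq_single J]
  · simp only [eq_self_iff_true, if_true]
    rw [Finset.prod_mul_distrib, Finset.prod_const, Finset.card_univ, Fintype.card_fin]
    ring
  · intro M hM hMJ
    obtain ⟨i, hi⟩ : ∃ i, M i ≠ J i := by
      by_contra hc
      push_neg at hc
      exact hMJ (Finsupp.ext hc)
    rw [Finset.prod_eq_zero (Finset.mem_univ i) (by rw [if_neg hi, zero_mul]), mul_zero]
  · intro h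
    exact absurd hJ h

theorem stmt17 {n : ℕ} (u : (Fin n → ℂ) → ℝ) (hu : Psh u) (htor : Toric u)
    (hlg : LogGrowth u) (hex : Exhaustive u) (hlct : lctInfty u < 1)
    (P : MvPolynomial (Fin n) ℂ) (R : ℝ)
    (hint : IntegrableOn
      (fun z : Fin n → ℂ => ‖MvPolynomial.eval z P‖ ^ 2 * Real.exp (-(2 * u z)))
      {z | R ≤ ‖z‖} volume) :
    ∀ J : Fin n →₀ ℕ, MvPolynomial.coeff J P ≠ 0 →
      IntegrableOn
        (fun z : Fin n → ℂ => ‖∏ i, z i ^ J i‖ ^ 2 * Real.exp (-(2 * u z)))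
        {z | R ≤ ‖z‖} volume := by
  intro J hJ
  have hum : Measurable u := hu.1.measurable
  have hJsup : J ∈ P.support := MvPolynomial.mem_support_iff.2 hJ
  set N : ℕ := P.totalDegree + 1 with hNdef
  have hN : 0 < N := Nat.succ_pos _
  have hdeg : ∀ M ∈ P.support, ∀ i, (M : Fin n →₀ ℕ) i < N := by
    intro M hM i
    have h1 : M i ≤ M.sum fun _ e => e := by
      by_cases h : M i = 0
      · simp [h]
      · exact Finset.single_le_sum (f := fun j => M j) (fun j _ => Nat.zero_le (M j))
          (Finsupp.mem_support_iff.2 h)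
    exact Nat.lt_succ_of_le (h1.trans (MvPolynomial.le_totalDegree hM))
  have hJN : ∀ i, J i < N := fun i => hdeg J hJsup i
  set ω : ℂ := Complex.exp (2 * Real.pi * Complex.I / N) with hωdef
  have hprim : IsPrimitiveRoot ω N := Complex.isPrimitiveRoot_exp N hN.ne'
  have hω0 : ω ≠ 0 := Complex.exp_ne_zero _
  have hω1 : ‖ω‖ = 1 := Complex.norm_eq_one_of_pow_eq_one hprim.pow_eq_one hN.ne'
  set S : Set (Fin n → ℂ) := {z | R ≤ ‖z‖} with hSdef
  have hSm : MeasurableSet S := measurableSet_le measurable_const measurable_norm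
  -- integrability of each rotated copy
  have hTint : ∀ k : Fin n → Fin N, IntegrableOn
      (fun z : Fin n → ℂ =>
        ‖MvPolynomial.eval (fun i => ω ^ (k i : ℕ) * z i) P‖ ^ 2 * Real.exp (-(2 * u z)))
      S volume := by
    intro k
    have hmem : ∀ i, (ω ^ (k i : ℕ)) ∈ Metric.sphere (0:ℂ) 1 := fun i => by
      rw [mem_sphere_zero_iff_norm, norm_pow, hω1, one_pow]
    set c : Fin n → Circle := fun i => ⟨ω ^ (k i : ℕ), hmem i⟩ with hc
    set T : (Fin n → ℂ) ≃ᵐ (Fin n → ℂ) :=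
      MeasurableEquiv.piCongrRight
        (fun i => (rotation (c i)).toHomeomorph.toMeasurableEquiv) with hT
    have hTapp : ∀ z : Fin n → ℂ, T z = fun i => ω ^ (k i : ℕ) * z i := fun z =>
      funext fun i => rotation_apply _ _
    have hmp : MeasurePreserving T volume volume :=
      aux_mp_pi _ fun i => (rotation (c i)).measurePreserving
    have hTnorm : ∀ z : Fin n → ℂ, ∀ i, ‖T z i‖ = ‖z i‖ := by
      intro z i
      rw [hTapp]
      simp [norm_pow, hω1]
    have hpre : T ⁻¹' S = S := by
      ext z
      have hnorm : ‖T z‖ = ‖z‖ := by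
        simp only [Pi.norm_def, Pi.nnnorm_def]
        congr 1
        refine Finset.sup_congr rfl fun i _ => ?_
        ext
        exact hTnorm z i
      simp [hSdef, hnorm]
    have h2 := ((hmp.restrict_preimage hSm).integrable_comp_emb
      T.measurableEmbedding).2 hint
    rw [hpre] at h2
    refine h2.congr (Filter.Eventually.of_forall fun z => ?_)
    have hu2 : u (fun i => ω ^ (k i : ℕ) * z i) = u z := by
      rw [show (fun i => ω ^ (k i : ℕ) * z i) = T z from (hTapp z).symm]
      exact htor _ _ (hTnorm z)
    simp only [Function.comp_apply, hTapp, hu2]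
  have hsum : IntegrableOn
      (fun z : Fin n → ℂ => ∑ k : Fin n → Fin N,
        ‖MvPolynomial.eval (fun i => ω ^ (k i : ℕ) * z i) P‖ ^ 2 * Real.exp (-(2 * u z)))
      S volume := integrable_finset_sum _ fun k _ => hTint k
  have hbound : IntegrableOn
      (fun z : Fin n → ℂ => (‖MvPolynomial.coeff J P‖ ^ 2)⁻¹ *
        ∑ k : Fin n → Fin N,
        ‖MvPolynomial.eval (fun i => ω ^ (k i : ℕ) * z i) P‖ ^ 2 * Real.exp (-(2 * u z)))
      S volume := hsum.const_mul _
  have hmeasf : Measurable (fun z : Fin n → ℂ =>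
      ‖∏ i, z i ^ J i‖ ^ 2 * Real.exp (-(2 * u z))) := by
    have hc : Continuous fun z : Fin n → ℂ => ‖∏ i, z i ^ J i‖ ^ 2 :=
      ((continuous_finset_prod Finset.univ fun i _ =>
        (continuous_apply i).pow (J i)).norm).pow 2
    exact hc.measurable.mul (Real.measurable_exp.comp ((hum.const_mul 2).neg))
  refine hbound.mono' (hmeasf.aestronglyMeasurable.restrict)
    (Filter.Eventually.of_forall fun z => ?_)
  -- pointwise bound
  set c0 : ℝ := ‖MvPolynomial.coeff J P‖ with hc0
  have hc0pos : 0 < c0 := norm_pos_iff.2 hJ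
  set B : ℝ := ‖∏ i, z i ^ J i‖ with hB
  set e : ℝ := Real.exp (-(2 * u z)) with he
  set a : (Fin n → Fin N) → ℝ :=
    fun k => ‖MvPolynomial.eval (fun i => ω ^ (k i : ℕ) * z i) P‖ with ha
  have hMge : (1:ℝ) ≤ (N:ℝ) ^ n := one_le_pow₀ (by exact_mod_cast hN)
  have h1 : (N:ℝ) ^ n * (c0 * B) ≤ ∑ k : Fin n → Fin N, a k := by
    have := aux_key P J hJsup hN hprim hω0 hJN hdeg z
    calc (N:ℝ) ^ n * (c0 * B)
        = ‖(N : ℂ) ^ n * (MvPolynomial.coeff J P * ∏ i, z i ^ J i)‖ := by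
          simp [norm_mul, norm_pow, hc0, hB]
      _ = ‖∑ k : Fin n → Fin N, ((∏ i, (ω ^ (J i * (k i : ℕ)))⁻¹) *
            MvPolynomial.eval (fun i => ω ^ (k i : ℕ) * z i) P)‖ := by rw [this]
      _ ≤ ∑ k : Fin n → Fin N, ‖(∏ i, (ω ^ (J i * (k i : ℕ)))⁻¹) *
            MvPolynomial.eval (fun i => ω ^ (k i : ℕ) * z i) P‖ := norm_sum_le _ _
      _ = ∑ k : Fin n → Fin N, a k := by
          refine Finset.sum_congr rfl fun k _ => ?_
          rw [norm_mul, ha]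
          have : ‖∏ i, (ω ^ (J i * (k i : ℕ)))⁻¹‖ = 1 := by
            simp [norm_prod, norm_inv, norm_pow, hω1]
          rw [this, one_mul]
  have h2 : (∑ k : Fin n → Fin N, a k) ^ 2 ≤ (N:ℝ) ^ n * ∑ k : Fin n → Fin N, a k ^ 2 := by
    have := sq_sum_le_card_mul_sum_sq (s := (Finset.univ : Finset (Fin n → Fin N)))
      (f := a)
    simpa [Finset.card_univ, Fintype.card_fun] using this
  have hBQ : B ^ 2 ≤ (c0 ^ 2)⁻¹ * ∑ k : Fin n → Fin N, a k ^ 2 := by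
    rw [inv_mul_eq_div, le_div_iff₀ (by positivity)]
    set Q : ℝ := ∑ k : Fin n → Fin N, a k ^ 2 with hQ
    have hBnn : (0:ℝ) ≤ B := by rw [hB]; exact norm_nonneg _
    have hMpos : (0:ℝ) < (N:ℝ) ^ n := by positivity
    have h3 : ((N:ℝ) ^ n * (c0 * B)) ^ 2 ≤ (N:ℝ) ^ n * Q :=
      le_trans (pow_le_pow_left₀ (by positivity) h1 2) h2
    have h4 : (N:ℝ) ^ n * (c0 * B) ^ 2 ≤ Q := by
      have h5 : (N:ℝ) ^ n * ((N:ℝ) ^ n * (c0 * B) ^ 2) ≤ (N:ℝ) ^ n * Q := by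
        calc (N:ℝ) ^ n * ((N:ℝ) ^ n * (c0 * B) ^ 2) = ((N:ℝ) ^ n * (c0 * B)) ^ 2 := by ring
          _ ≤ (N:ℝ) ^ n * Q := h3
      exact (mul_le_mul_iff_right₀ hMpos).1 h5
    calc B ^ 2 * c0 ^ 2 = 1 * (c0 * B) ^ 2 := by ring
      _ ≤ (N:ℝ) ^ n * (c0 * B) ^ 2 := by nlinarith [sq_nonneg (c0 * B)]
      _ ≤ Q := h4
  have hfin : B ^ 2 * e ≤ (c0 ^ 2)⁻¹ *
      ∑ k : Fin n → Fin N, a k ^ 2 * e := by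
    rw [← Finset.sum_mul, ← mul_assoc]
    exact mul_le_mul_of_nonneg_right hBQ (Real.exp_nonneg _)
  calc ‖‖∏ i, z i ^ J i‖ ^ 2 * Real.exp (-(2 * u z))‖
      = B ^ 2 * e := Real.norm_of_nonneg (by positivity)
    _ ≤ _ := hfin
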